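/- arXiv:1108.3988 — 6 statements merged into one kernel-verified Lean document; each statement's English description precedes it below -/
import Mathlib

section
/- Under the multiplicative drift condition Q(e^V) ≤ e^{V(1−δ) + b_d·1_{C_d}}, for any r ≥ d̲ the restriction bound 1_{C_r^c}·Q(e^V) ≤ e^{V − δr} holds, and consequently the truncated operator Q̂^{(r)} := 1_{C_r}·Q satisfies the operator norm bound |||Q − Q̂^{(r)}|||_v ≤ e^{−δr}. -/
open MeasureTheory
open scoped ENNReal

/-- Under the multiplicative drift condition `Q(e^V) ≤ e^{V(1−δ) + b_d·1_{C_d}}` (for all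
`d ≥ d̲`), for any `r ≥ d̲` the restriction bound `1_{C_r^c}·Q(e^V) ≤ e^{V − δr}` holds,
and consequently the truncated operator `Q̂^{(r)} = 1_{C_r}·Q` satisfies the operator-norm
bound `|||Q − Q̂^{(r)}|||_v ≤ e^{−δr}`, i.e. for every `φ` with `|φ| ≤ v = e^V`,
`1_{C_r^c}(x)·Q(φ)(x) ≤ e^{−δr}·v(x)` for all `x`. -/
theorem truncation_bound_of_mult_drift
    {X : Type*} [MeasurableSpace X] (Q : X → Measure X)
    (V : X → ℝ) (hV1 : ∀ x, 1 ≤ V x) (hVunb : ∀ r : ℝ, ∃ x, r < V x)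
    (δ : ℝ) (hδ : δ ∈ Set.Ioo (0 : ℝ) 1) (dlow : ℝ) (hdlow : 1 ≤ dlow)
    (b : ℝ → ℝ)
    (hdrift : ∀ d, dlow ≤ d → ∀ x,
      ∫⁻ y, ENNReal.ofReal (Real.exp (V y)) ∂(Q x)
        ≤ ENNReal.ofReal (Real.exp (V x * (1 - δ)
            + b d * Set.indicator {z | V z ≤ d} (fun _ => (1 : ℝ)) x)))
    (r : ℝ) (hr : dlow ≤ r) :
    (∀ x, r < V x →
      ∫⁻ y, ENNReal.ofReal (Real.exp (V y)) ∂(Q x)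
        ≤ ENNReal.ofReal (Real.exp (V x - δ * r)))
    ∧ (∀ φ : X → ℝ≥0∞, (∀ y, φ y ≤ ENNReal.ofReal (Real.exp (V y))) → ∀ x,
        Set.indicator {z | V z ≤ r}ᶜ (fun x' => ∫⁻ y, φ y ∂(Q x')) x
          ≤ ENNReal.ofReal (Real.exp (-(δ * r))) * ENNReal.ofReal (Real.exp (V x))) := by
  obtain ⟨hδ0, hδ1⟩ := hδ
  have key : ∀ x, r < V x →
      ∫⁻ y, ENNReal.ofReal (Real.exp (V y)) ∂(Q x)
        ≤ ENNReal.ofReal (Real.exp (V x - δ * r)) := by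
    intro x hx
    have h := hdrift r hr x
    have hind : Set.indicator {z | V z ≤ r} (fun _ => (1 : ℝ)) x = 0 := by
      apply Set.indicator_of_notMem
      simp only [Set.mem_setOf_eq]; linarith
    rw [hind] at h
    refine h.trans ?_
    apply ENNReal.ofReal_le_ofReal
    apply Real.exp_le_exp.mpr
    have : δ * r ≤ δ * V x := by nlinarith
    nlinarith
  refine ⟨key, ?_⟩
  intro φ hφ x
  by_cases hx : x ∈ {z | V z ≤ r}ᶜ
  · rw [Set.indicator_of_mem hx]
    have hx' : r < V x := by simpa [not_le] using hx
    calc ∫⁻ y, φ y ∂(Q x) ≤ ∫⁻ y, ENNReal.ofReal (Real.exp (V y)) ∂(Q x) :=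
          lintegral_mono fun y => hφ y
      _ ≤ ENNReal.ofReal (Real.exp (V x - δ * r)) := key x hx'
      _ = ENNReal.ofReal (Real.exp (-(δ * r))) * ENNReal.ofReal (Real.exp (V x)) := by
          rw [← ENNReal.ofReal_mul (Real.exp_nonneg _), ← Real.exp_add]; ring_nf
  · rw [Set.indicator_of_notMem hx]; exact zero_le
end

section
/- Under the drift conditions (i) sup_{n≥0} P̌_n(v*) ≤ c_1·v* and (ii) v·P̌_n(v*) ≤ c·v* for all n ≥ 1, for any n ≥ 1, 1 ≤ s ≤ n+1 and coalescent time configuration 0 ≤ i_1 < ... < i_s ≤ n, the expectation of the product Ě_x[ ∏_{k ∈ {i_1,...,i_s}} v(X̌_k) · v*(X̌_{n+1}) ] is bounded by c^{s+1}·v*(x) for all x. -/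
open MeasureTheory
open scoped ENNReal

/-- The action of a kernel on nonnegative functions. -/
noncomputable def kernelOp {X : Type*} [MeasurableSpace X] (P : X → Measure X)
    (f : X → ℝ≥0∞) : X → ℝ≥0∞ :=
  fun x => ∫⁻ y, f y ∂(P x)

/-- For a Markov chain with kernel `P` started at time `t`, `chainProdExp P v vstar nfin t l x`
is the expectation `Ě_x[∏_{k∈l} v(X̌_{k−t}) · v*(X̌_{nfin−t})]` written via iterated
kernel operators, where `l` is the (strictly increasing) list of coalescent times. -/
noncomputable def chainProdExp {X : Type*} [MeasurableSpace X] (P : X → Measure X)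
    (v vstar : X → ℝ≥0∞) (nfin : ℕ) : ℕ → List ℕ → X → ℝ≥0∞
  | t, [] => (kernelOp P)^[nfin - t] vstar
  | t, k :: ks => (kernelOp P)^[k - t] (fun x => v x * chainProdExp P v vstar nfin k ks x)

lemma kernelOp_iterate_mono {X : Type*} [MeasurableSpace X] (P : X → Measure X)
    {f g : X → ℝ≥0∞} (h : ∀ x, f x ≤ g x) (m : ℕ) :
    ∀ x, (kernelOp P)^[m] f x ≤ (kernelOp P)^[m] g x := by
  induction m with
  | zero => simpa using h
  | succ m ih =>
    intro x
    rw [Function.iterate_succ_apply', Function.iterate_succ_apply']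
    exact lintegral_mono fun y => ih y

lemma kernelOp_iterate_const_mul {X : Type*} [MeasurableSpace X] (P : X → Measure X)
    (r : ℝ≥0∞) (hr : r ≠ ⊤) (f : X → ℝ≥0∞) (m : ℕ) :
    ∀ x, (kernelOp P)^[m] (fun y => r * f y) x = r * (kernelOp P)^[m] f x := by
  induction m with
  | zero => intro x; simp
  | succ m ih =>
    intro x
    rw [Function.iterate_succ_apply', Function.iterate_succ_apply']
    calc kernelOp P ((kernelOp P)^[m] fun y => r * f y) x
        = ∫⁻ y, (kernelOp P)^[m] (fun y => r * f y) y ∂(P x) := rfl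
      _ = ∫⁻ y, r * (kernelOp P)^[m] f y ∂(P x) := by simp_rw [ih]
      _ = r * ∫⁻ y, (kernelOp P)^[m] f y ∂(P x) := lintegral_const_mul' r _ hr

lemma kernelOp_iterate_le {X : Type*} [MeasurableSpace X] (P : X → Measure X)
    {f g : X → ℝ≥0∞} {r : ℝ≥0∞} (hr : r ≠ ⊤) (h : ∀ x, f x ≤ r * g x) (m : ℕ) :
    ∀ x, (kernelOp P)^[m] f x ≤ r * (kernelOp P)^[m] g x := by
  intro x
  calc (kernelOp P)^[m] f x ≤ (kernelOp P)^[m] (fun y => r * g y) x :=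
        kernelOp_iterate_mono P h m x
    _ = r * (kernelOp P)^[m] g x := kernelOp_iterate_const_mul P r hr g m x

lemma claimA {X : Type*} [MeasurableSpace X] (P : X → Measure X)
    (v vstar : X → ℝ≥0∞)
    (c : ℝ≥0∞) (hc : c < ⊤)
    (hmult : ∀ n : ℕ, 1 ≤ n → ∀ x : X, v x * (kernelOp P)^[n] vstar x ≤ c * vstar x)
    (n : ℕ) :
    ∀ l : List ℕ, l.Chain' (· < ·) → (∀ k ∈ l, k ≤ n) → ∀ t : ℕ,
      (∀ k, l.head? = some k → t < k) → (l = [] → t ≤ n) → ∀ x,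
      v x * chainProdExp P v vstar (n + 1) t l x ≤ c ^ (l.length + 1) * vstar x := by
  intro l
  induction l with
  | nil =>
    intro _ _ t _ hnil x
    have ht : t ≤ n := hnil rfl
    have h1 : 1 ≤ n + 1 - t := by omega
    simpa [chainProdExp] using hmult (n + 1 - t) h1 x
  | cons k ks ih =>
    intro hchain hle t hhead _ x
    have hk : k ≤ n := hle k (by simp)
    have htk : t < k := hhead k rfl
    -- inner bound from IH
    have hinner : ∀ y, v y * chainProdExp P v vstar (n + 1) k ks y
        ≤ c ^ (ks.length + 1) * vstar y := by
      apply ih hchain.tail (fun j hj => hle j (List.mem_cons_of_mem _ hj)) k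
      · intro j hj
        cases ks with
        | nil => simp at hj
        | cons k' ks' =>
          simp at hj
          subst hj
          exact (List.isChain_cons_cons.mp hchain).1
      · intro _; exact hk
    have hcpow : c ^ (ks.length + 1) ≠ ⊤ := ENNReal.pow_ne_top hc.ne
    have hstep : (kernelOp P)^[k - t] (fun y => v y * chainProdExp P v vstar (n + 1) k ks y) x
        ≤ c ^ (ks.length + 1) * (kernelOp P)^[k - t] vstar x :=
      kernelOp_iterate_le P hcpow hinner (k - t) x
    have h1 : 1 ≤ k - t := by omega
    calc v x * chainProdExp P v vstar (n + 1) t (k :: ks) x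
        = v x * (kernelOp P)^[k - t] (fun y => v y * chainProdExp P v vstar (n + 1) k ks y) x := by
          simp [chainProdExp]
      _ ≤ v x * (c ^ (ks.length + 1) * (kernelOp P)^[k - t] vstar x) :=
          mul_le_mul_right hstep _
      _ = c ^ (ks.length + 1) * (v x * (kernelOp P)^[k - t] vstar x) := by ring
      _ ≤ c ^ (ks.length + 1) * (c * vstar x) :=
          mul_le_mul_right (hmult (k - t) h1 x) _
      _ = c ^ ((k :: ks).length + 1) * vstar x := by
          simp [List.length_cons, pow_succ]; ring

/-- Under the drift conditions (i) `sup_{n≥0} P̌_n(v*) ≤ c·v*` and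
(ii) `v·P̌_n(v*) ≤ c·v*` for all `n ≥ 1`, for any `n ≥ 1`, `1 ≤ s ≤ n+1` and coalescent
time configuration `0 ≤ i_1 < ... < i_s ≤ n`, the expectation
`Ě_x[∏_{k∈{i_1,...,i_s}} v(X̌_k)·v*(X̌_{n+1})]` is bounded by `c^{s+1}·v*(x)` for all `x`. -/
theorem chain_product_expectation_bound
    {X : Type*} [MeasurableSpace X] (P : X → Measure X)
    (hP : ∀ x, IsProbabilityMeasure (P x))
    (v vstar : X → ℝ≥0∞) (hv1 : ∀ x, 1 ≤ v x) (hvv : ∀ x, v x ≤ vstar x)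
    (c : ℝ≥0∞) (hc : c < ⊤)
    (hiter : ∀ (n : ℕ) (x : X), (kernelOp P)^[n] vstar x ≤ c * vstar x)
    (hmult : ∀ n : ℕ, 1 ≤ n → ∀ x : X, v x * (kernelOp P)^[n] vstar x ≤ c * vstar x) :
    ∀ n : ℕ, 1 ≤ n → ∀ l : List ℕ, l ≠ [] → l.length ≤ n + 1 →
      l.Chain' (· < ·) → (∀ k ∈ l, k ≤ n) → ∀ x,
        chainProdExp P v vstar (n + 1) 0 l x ≤ c ^ (l.length + 1) * vstar x := by
  intro n _ l hne _ hchain hle x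
  cases l with
  | nil => exact absurd rfl hne
  | cons k ks =>
    have hk : k ≤ n := hle k (by simp)
    have hinner : ∀ y, v y * chainProdExp P v vstar (n + 1) k ks y
        ≤ c ^ (ks.length + 1) * vstar y := by
      apply claimA P v vstar c hc hmult n ks hchain.tail
        (fun j hj => hle j (List.mem_cons_of_mem _ hj)) k
      · intro j hj
        cases ks with
        | nil => simp at hj
        | cons k' ks' =>
          simp at hj
          subst hj
          exact (List.isChain_cons_cons.mp hchain).1
      · intro _; exact hk
    have hcpow : c ^ (ks.length + 1) ≠ ⊤ := ENNReal.pow_ne_top hc.ne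
    calc chainProdExp P v vstar (n + 1) 0 (k :: ks) x
        = (kernelOp P)^[k - 0] (fun y => v y * chainProdExp P v vstar (n + 1) k ks y) x := by
          simp [chainProdExp]
      _ ≤ c ^ (ks.length + 1) * (kernelOp P)^[k - 0] vstar x :=
          kernelOp_iterate_le P hcpow hinner _ x
      _ ≤ c ^ (ks.length + 1) * (c * vstar x) :=
          mul_le_mul_right (hiter _ x) _
      _ = c ^ ((k :: ks).length + 1) * vstar x := by
          simp [List.length_cons, pow_succ]; ring
end

section
/- Let Q(x,dy) = e^{U(x)}·M(x,dy) with U(x) = −x² and M the standard Gaussian random walk kernel on ℝ. Then there exist δ_0 > 0, δ ∈ (0,1), and for each sufficiently large d a constant b_d < ∞ such that with V(x) = x²/(2(1+δ_0)) + 1, the multiplicative drift condition Q(e^V)(x) ≤ exp(V(x)(1−δ) + b_d·1_{C_d}(x)) holds for all x ∈ ℝ, where C_d = {x : V(x) ≤ d}. -/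
open MeasureTheory

/-- Let `Q(x,dy) = e^{U(x)}·M(x,dy)` with `U(x) = −x²` and `M` the standard Gaussian
random walk kernel on `ℝ`. Then there exist `δ_0 > 0`, `δ ∈ (0,1)`, and for each
sufficiently large `d` a constant `b_d < ∞` such that, with
`V(x) = x²/(2(1+δ_0)) + 1`, the multiplicative drift condition
`Q(e^V)(x) ≤ exp(V(x)(1−δ) + b_d·1_{C_d}(x))` holds for all `x ∈ ℝ`,
where `C_d = {x : V(x) ≤ d}`. -/
theorem gaussian_random_walk_mult_drift :
    ∃ δ0 : ℝ, 0 < δ0 ∧ ∃ δ : ℝ, 0 < δ ∧ δ < 1 ∧ ∃ D : ℝ, ∀ d : ℝ, D ≤ d → ∃ b : ℝ,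
      ∀ x : ℝ,
        Real.exp (-(x ^ 2)) *
            ∫ y : ℝ, Real.exp (y ^ 2 / (2 * (1 + δ0)) + 1) *
              ((Real.sqrt (2 * Real.pi))⁻¹ * Real.exp (-((y - x) ^ 2) / 2))
          ≤ Real.exp ((x ^ 2 / (2 * (1 + δ0)) + 1) * (1 - δ)
              + b * Set.indicator {z : ℝ | z ^ 2 / (2 * (1 + δ0)) + 1 ≤ d}
                  (fun _ => (1 : ℝ)) x) := by
  refine ⟨1, one_pos, 1/2, by norm_num, by norm_num, 2, fun d hd => ⟨1, fun x => ?_⟩⟩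
  -- Evaluate the Gaussian integral
  have hint : (∫ y : ℝ, Real.exp (y ^ 2 / (2 * (1 + 1)) + 1) *
      ((Real.sqrt (2 * Real.pi))⁻¹ * Real.exp (-((y - x) ^ 2) / 2)))
      = (Real.sqrt (2 * Real.pi))⁻¹ * Real.exp (1 + x ^ 2 / 2) * Real.sqrt (Real.pi / (1/4)) := by
    have hpt : ∀ y : ℝ, Real.exp (y ^ 2 / (2 * (1 + 1)) + 1) *
        ((Real.sqrt (2 * Real.pi))⁻¹ * Real.exp (-((y - x) ^ 2) / 2))
        = (Real.sqrt (2 * Real.pi))⁻¹ * Real.exp (1 + x ^ 2 / 2) *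
          Real.exp (-(1/4) * (y - 2*x) ^ 2) := by
      intro y
      rw [mul_left_comm, ← Real.exp_add, mul_assoc, ← Real.exp_add]
      congr 1
      ring_nf
    simp_rw [hpt]
    rw [MeasureTheory.integral_const_mul]
    congr 1
    have := MeasureTheory.integral_sub_right_eq_self (μ := volume)
      (fun y : ℝ => Real.exp (-(1/4) * y ^ 2)) (2*x)
    rw [this, integral_gaussian]
  rw [hint]
  -- Simplify the constant : (√(2π))⁻¹ * √(π/(1/4)) = √2
  have hπ : 0 < Real.sqrt Real.pi := Real.sqrt_pos.2 Real.pi_pos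
  have h2 : Real.sqrt 2 * Real.sqrt 2 = 2 := Real.mul_self_sqrt (by norm_num)
  have h2pos : 0 < Real.sqrt 2 := Real.sqrt_pos.2 (by norm_num)
  have hconst : (Real.sqrt (2 * Real.pi))⁻¹ * Real.sqrt (Real.pi / (1/4)) = Real.sqrt 2 := by
    have h1 : Real.pi / (1/4) = 4 * Real.pi := by ring
    rw [h1, Real.sqrt_mul (by norm_num : (0:ℝ) ≤ 2), Real.sqrt_mul (by norm_num : (0:ℝ) ≤ 4)]
    have h4 : Real.sqrt 4 = 2 := by
      rw [show (4:ℝ) = 2^2 by norm_num, Real.sqrt_sq (by norm_num)]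
    rw [h4]
    field_simp
    nlinarith [h2, hπ, h2pos]
  -- Bound √2 ≤ exp (1/2)
  have hsqrt2 : Real.sqrt 2 ≤ Real.exp (1/2) := by
    have h32 : (1:ℝ)/2 + 1 ≤ Real.exp (1/2) := Real.add_one_le_exp (1/2)
    have : Real.sqrt 2 ≤ 3/2 := by
      rw [show (3:ℝ)/2 = Real.sqrt ((3/2)^2) by rw [Real.sqrt_sq (by norm_num)]]
      exact Real.sqrt_le_sqrt (by norm_num)
    linarith
  calc Real.exp (-(x ^ 2)) * ((Real.sqrt (2 * Real.pi))⁻¹ * Real.exp (1 + x ^ 2 / 2) *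
          Real.sqrt (Real.pi / (1/4)))
      = Real.sqrt 2 * Real.exp (-(x ^ 2) + (1 + x ^ 2 / 2)) := by
        rw [show Real.exp (-(x ^ 2)) * ((Real.sqrt (2 * Real.pi))⁻¹ * Real.exp (1 + x ^ 2 / 2) *
            Real.sqrt (Real.pi / (1/4)))
          = ((Real.sqrt (2 * Real.pi))⁻¹ * Real.sqrt (Real.pi / (1/4))) *
            (Real.exp (-(x ^ 2)) * Real.exp (1 + x ^ 2 / 2)) from by ring,
          hconst, ← Real.exp_add]
    _ ≤ Real.exp (1/2) * Real.exp (-(x ^ 2) + (1 + x ^ 2 / 2)) := by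
        exact mul_le_mul_of_nonneg_right hsqrt2 (Real.exp_nonneg _)
    _ = Real.exp (3/2 - x ^ 2 / 2) := by rw [← Real.exp_add]; congr 1; ring
    _ ≤ _ := by
        rw [Real.exp_le_exp]
        by_cases hx : x ∈ {z : ℝ | z ^ 2 / (2 * (1 + 1)) + 1 ≤ d}
        · rw [Set.indicator_of_mem hx]
          nlinarith [sq_nonneg x]
        · rw [Set.indicator_of_notMem hx]
          simp only [Set.mem_setOf_eq, not_le] at hx
          nlinarith [sq_nonneg x]
end

section
/- Suppose M satisfies the multiplicative drift M(e^V) ≤ e^{V(1−δ_1)+b_d·1_{C_d}} for all d ≥ d_1, and U: X → ℝ satisfies U⁺ ∈ L_V with ‖1_{C_r^c}·U⁺‖_V → 0 as r → ∞. Then for any δ ∈ (0, δ_1) there exists d̲ such that for all d ≥ d̲, the kernel Q(x,dy) := e^{U(x)} M(x,dy) satisfies Q(e^V) ≤ e^{V(1−δ) + b̄_d·1_{C_d}} with b̄_d = b_d + d·‖U⁺‖_V. -/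
open MeasureTheory
open scoped ENNReal

/-- Suppose `M` satisfies the multiplicative drift `M(e^V) ≤ e^{V(1−δ_1)+b_d·1_{C_d}}`
for all `d ≥ d_1`, and `U : X → ℝ` satisfies `U⁺ ∈ L_V` (with `‖U⁺‖_V ≤ nU`) and
`‖1_{C_r^c}·U⁺‖_V → 0` as `r → ∞`. Then for any `δ ∈ (0,δ_1)` there exists `d̲` such
that for all `d ≥ d̲` the kernel `Q(x,dy) = e^{U(x)}M(x,dy)` satisfies
`Q(e^V) ≤ e^{V(1−δ) + b̄_d·1_{C_d}}` with `b̄_d = b_d + d·‖U⁺‖_V`. -/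
theorem mult_drift_transfer_to_Q
    {X : Type*} [MeasurableSpace X] (M : X → Measure X)
    (V : X → ℝ) (hV1 : ∀ x, 1 ≤ V x) (hVunb : ∀ r : ℝ, ∃ x, r < V x)
    (δ1 : ℝ) (hδ1 : 0 < δ1) (d1 : ℝ) (hd1 : 1 ≤ d1) (b : ℝ → ℝ)
    (hdrift : ∀ d, d1 ≤ d → ∀ x,
      ∫⁻ y, ENNReal.ofReal (Real.exp (V y)) ∂(M x)
        ≤ ENNReal.ofReal (Real.exp (V x * (1 - δ1)
            + b d * Set.indicator {z | V z ≤ d} (fun _ => (1 : ℝ)) x)))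
    (U : X → ℝ) (nU : ℝ) (hnU : ∀ x, max (U x) 0 ≤ nU * V x)
    (hlim : ∀ ε : ℝ, 0 < ε → ∃ r : ℝ, ∀ x, r < V x → max (U x) 0 ≤ ε * V x)
    (δ : ℝ) (hδpos : 0 < δ) (hδlt : δ < δ1) :
    ∃ dlow : ℝ, d1 ≤ dlow ∧ ∀ d, dlow ≤ d → ∀ x,
      ENNReal.ofReal (Real.exp (U x)) * ∫⁻ y, ENNReal.ofReal (Real.exp (V y)) ∂(M x)
        ≤ ENNReal.ofReal (Real.exp (V x * (1 - δ)
            + (b d + d * nU) * Set.indicator {z | V z ≤ d} (fun _ => (1 : ℝ)) x)) := by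
  obtain ⟨r, hr⟩ := hlim (δ1 - δ) (by linarith)
  have hnU0 : 0 ≤ nU := by
    obtain ⟨x₀, _⟩ := hVunb 0
    nlinarith [le_max_right (U x₀) 0, hnU x₀, hV1 x₀]
  refine ⟨max d1 r, le_max_left _ _, fun d hd x => ?_⟩
  have hd1d : d1 ≤ d := le_trans (le_max_left _ _) hd
  have hrd : r ≤ d := le_trans (le_max_right _ _) hd
  calc ENNReal.ofReal (Real.exp (U x)) * ∫⁻ y, ENNReal.ofReal (Real.exp (V y)) ∂(M x)
      ≤ ENNReal.ofReal (Real.exp (U x)) * ENNReal.ofReal (Real.exp (V x * (1 - δ1)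
          + b d * Set.indicator {z | V z ≤ d} (fun _ => (1 : ℝ)) x)) :=
        mul_le_mul_right (hdrift d hd1d x) _
    _ = ENNReal.ofReal (Real.exp (U x + (V x * (1 - δ1)
          + b d * Set.indicator {z | V z ≤ d} (fun _ => (1 : ℝ)) x))) := by
        rw [← ENNReal.ofReal_mul (Real.exp_nonneg _), ← Real.exp_add]
    _ ≤ ENNReal.ofReal (Real.exp (V x * (1 - δ)
          + (b d + d * nU) * Set.indicator {z | V z ≤ d} (fun _ => (1 : ℝ)) x)) := by
        apply ENNReal.ofReal_le_ofReal
        apply Real.exp_le_exp.2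
        by_cases hx : V x ≤ d
        · rw [Set.indicator_of_mem (by exact hx : x ∈ {z | V z ≤ d})]
          have h1 : U x ≤ nU * V x := le_trans (le_max_left _ _) (hnU x)
          have h2 : nU * V x ≤ nU * d := by nlinarith
          nlinarith [hV1 x]
        · rw [Set.indicator_of_notMem (by exact hx : x ∉ {z | V z ≤ d})]
          have h1 : U x ≤ (δ1 - δ) * V x :=
            le_trans (le_max_left _ _) (hr x (by linarith [lt_of_not_ge hx]))
          nlinarith [hV1 x]
end

section
/- Suppose |||M|||_v < ∞ and U satisfies: U bounded below on each C_d; U bounded above on C_{d_1}; and U(x)/V(x) ≤ −δ_1 for x outside C_{d_1}, for some δ_1 ∈ (0,1). Then for any δ ∈ (0,δ_1) there exists d̲ such that for all d ≥ d̲ the kernel Q = e^U·M satisfies: 1_{C_d^c}·Q(e^V) ≤ e^{V(1−δ)} and 1_{C_d}·Q(e^V) ≤ exp(d + sup_{y ∈ C_d} U(y) + log|||M|||_v); hence Q satisfies a multiplicative drift condition Q(e^V) ≤ e^{V(1−δ)+b_d·1_{C_d}} with b_d = d + sup_{C_d} U + log|||M|||_v. -/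
open MeasureTheory
open scoped ENNReal

/-- Suppose `|||M|||_v ≤ nM < ∞` and `U` satisfies: `U` bounded below on each `C_d`;
`U` bounded above on `C_{d_1}`; and `U(x)/V(x) ≤ −δ_1` for `x` outside `C_{d_1}`, for
some `δ_1 ∈ (0,1)`. Then for any `δ ∈ (0,δ_1)` there exists `d̲` such that for all
`d ≥ d̲` the kernel `Q = e^U·M` satisfies `1_{C_d^c}·Q(e^V) ≤ e^{V(1−δ)}` and
`1_{C_d}·Q(e^V) ≤ exp(d + sup_{C_d} U + log|||M|||_v)`; hence `Q` satisfies the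
multiplicative drift `Q(e^V) ≤ e^{V(1−δ)+b_d·1_{C_d}}` with
`b_d = d + sup_{C_d} U + log|||M|||_v`. -/
theorem mult_drift_from_decaying_potential
    {X : Type*} [MeasurableSpace X] (M : X → Measure X)
    (V : X → ℝ) (hV1 : ∀ x, 1 ≤ V x) (hVunb : ∀ r : ℝ, ∃ x, r < V x)
    (nM : ℝ) (hnM : 1 ≤ nM)
    (hMv : ∀ x, ∫⁻ y, ENNReal.ofReal (Real.exp (V y)) ∂(M x)
      ≤ ENNReal.ofReal (nM * Real.exp (V x)))
    (U : X → ℝ)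
    (hUinf : ∀ d : ℝ, ∃ m : ℝ, ∀ x, V x ≤ d → m ≤ U x)
    (d1 δ1 : ℝ) (hδ1 : δ1 ∈ Set.Ioo (0 : ℝ) 1)
    (hUsup : BddAbove (U '' {x | V x ≤ d1}))
    (hUd : ∀ x, d1 < V x → U x ≤ -δ1 * V x)
    (δ : ℝ) (hδpos : 0 < δ) (hδlt : δ < δ1) :
    ∃ dlow : ℝ, ∀ d, dlow ≤ d →
      (∀ x, d < V x →
        ENNReal.ofReal (Real.exp (U x)) * ∫⁻ y, ENNReal.ofReal (Real.exp (V y)) ∂(M x)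
          ≤ ENNReal.ofReal (Real.exp (V x * (1 - δ))))
      ∧ (∀ x, V x ≤ d →
        ENNReal.ofReal (Real.exp (U x)) * ∫⁻ y, ENNReal.ofReal (Real.exp (V y)) ∂(M x)
          ≤ ENNReal.ofReal (Real.exp (d + sSup (U '' {z | V z ≤ d}) + Real.log nM)))
      ∧ (∀ x,
        ENNReal.ofReal (Real.exp (U x)) * ∫⁻ y, ENNReal.ofReal (Real.exp (V y)) ∂(M x)
          ≤ ENNReal.ofReal (Real.exp (V x * (1 - δ)
              + (d + sSup (U '' {z | V z ≤ d}) + Real.log nM)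
                * Set.indicator {z | V z ≤ d} (fun _ => (1 : ℝ)) x))) := by

  obtain ⟨hδ1pos, hδ1lt⟩ := hδ1
  obtain ⟨b, hb⟩ := hUsup
  have hδδ : 0 < δ1 - δ := by linarith
  have hnM0 : 0 < nM := lt_of_lt_of_le one_pos hnM
  refine ⟨max d1 (Real.log nM / (δ1 - δ)), fun d hd => ?_⟩
  have hdd1 : d1 ≤ d := le_trans (le_max_left _ _) hd
  have hlog : Real.log nM ≤ (δ1 - δ) * d := by
    have h := le_trans (le_max_right d1 (Real.log nM / (δ1 - δ))) hd
    rw [div_le_iff₀ hδδ] at h; linarith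
  have hBdd : BddAbove (U '' {z | V z ≤ d}) := by
    refine ⟨max b 0, ?_⟩
    rintro _ ⟨x, hx, rfl⟩
    by_cases h : V x ≤ d1
    · exact le_max_of_le_left (hb ⟨x, h, rfl⟩)
    · push_neg at h
      refine le_max_of_le_right ?_
      have h1 := hUd x h
      nlinarith [hV1 x]
  have key : ∀ x, ENNReal.ofReal (Real.exp (U x)) *
      ∫⁻ y, ENNReal.ofReal (Real.exp (V y)) ∂(M x)
      ≤ ENNReal.ofReal (Real.exp (U x) * (nM * Real.exp (V x))) := by
    intro x
    rw [ENNReal.ofReal_mul (Real.exp_pos _).le]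
    exact mul_le_mul_right (hMv x) _
  have hexp : ∀ x, Real.exp (U x) * (nM * Real.exp (V x))
      = Real.exp (U x + Real.log nM + V x) := by
    intro x
    rw [Real.exp_add, Real.exp_add, Real.exp_log hnM0]; ring
  have part1 : ∀ x, d < V x →
      ENNReal.ofReal (Real.exp (U x)) * ∫⁻ y, ENNReal.ofReal (Real.exp (V y)) ∂(M x)
        ≤ ENNReal.ofReal (Real.exp (V x * (1 - δ))) := by
    intro x hx
    refine (key x).trans (ENNReal.ofReal_le_ofReal ?_)
    rw [hexp]
    apply Real.exp_le_exp.mpr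
    have hU := hUd x (lt_of_le_of_lt hdd1 hx)
    have hlog' : Real.log nM ≤ (δ1 - δ) * V x :=
      le_trans hlog (by nlinarith)
    nlinarith
  have part2 : ∀ x, V x ≤ d →
      ENNReal.ofReal (Real.exp (U x)) * ∫⁻ y, ENNReal.ofReal (Real.exp (V y)) ∂(M x)
        ≤ ENNReal.ofReal (Real.exp (d + sSup (U '' {z | V z ≤ d}) + Real.log nM)) := by
    intro x hx
    refine (key x).trans (ENNReal.ofReal_le_ofReal ?_)
    rw [hexp]
    apply Real.exp_le_exp.mpr
    have hS : U x ≤ sSup (U '' {z | V z ≤ d}) := le_csSup hBdd ⟨x, hx, rfl⟩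
    linarith
  refine ⟨part1, part2, fun x => ?_⟩
  by_cases h : V x ≤ d
  · refine (part2 x h).trans (ENNReal.ofReal_le_ofReal (Real.exp_le_exp.mpr ?_))
    have hi : Set.indicator {z | V z ≤ d} (fun _ => (1 : ℝ)) x = 1 :=
      Set.indicator_of_mem (show x ∈ {z | V z ≤ d} from h) _
    rw [hi]
    have h0 : 0 ≤ V x * (1 - δ) :=
      mul_nonneg (le_trans zero_le_one (hV1 x)) (by linarith)
    linarith
  · push_neg at h
    refine (part1 x h).trans (ENNReal.ofReal_le_ofReal (Real.exp_le_exp.mpr ?_))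
    have hi : Set.indicator {z | V z ≤ d} (fun _ => (1 : ℝ)) x = 0 :=
      Set.indicator_of_notMem (show x ∉ {z | V z ≤ d} from fun hh => absurd hh (not_le.mpr h)) _
    rw [hi]
    simp
end

section
/- For the Cox-Ingersoll-Ross transition kernel M^Δ with parameters θ, μ, σ > 0, and with drift function V(x) = 1 + 4θsx/(σ²(1−e^{−θΔ})): if s ∈ (0, (1−e^{−θΔ})/2), δ ∈ (0, 1 − e^{−θΔ}/(1−2s)), and d ≥ (1 − 2θμ·log(1−2s)/σ²)/(1 − e^{−θΔ}/(1−2s) − δ), then M^Δ(e^V)(x) ≤ exp(V(x)(1−δ) + b_d·1_{C_d}(x)) for all x > 0, where b_d = d·e^{−θΔ}/(1−2s) − (2θμ/σ²)·log(1−2s) + 1. -/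
open MeasureTheory
open scoped ENNReal

/-- For the Cox-Ingersoll-Ross transition kernel `M^Δ` with parameters `θ, μ, σ > 0`
(with `2θμ/σ² > 1`), and drift function `V(x) = 1 + 4θsx/(σ²(1−e^{−θΔ})) = 1 + 2c_Δ s x`:
if `s ∈ (0,(1−e^{−θΔ})/2)`, `δ ∈ (0, 1 − e^{−θΔ}/(1−2s))` and
`d ≥ (1 − 2θμ·log(1−2s)/σ²)/(1 − e^{−θΔ}/(1−2s) − δ)`, then
`M^Δ(e^V)(x) ≤ exp(V(x)(1−δ) + b_d·1_{C_d}(x))` for all `x > 0`, where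
`b_d = d·e^{−θΔ}/(1−2s) − (2θμ/σ²)·log(1−2s) + 1`. The MGF formula for the scaled
non-central chi-square transition is taken as a hypothesis. -/
theorem cir_mult_drift
    (θ μ σ Δ : ℝ) (hθ : 0 < θ) (hμ : 0 < μ) (hσ : 0 < σ) (hΔ : 0 < Δ)
    (hstat : 1 < 2 * θ * μ / σ ^ 2)
    (M : ℝ → Measure ℝ)
    (cΔ κ : ℝ)
    (hcΔ : cΔ = 2 * θ / (σ ^ 2 * (1 - Real.exp (-(θ * Δ)))))
    (hκ : κ = 4 * θ * μ / σ ^ 2)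
    -- the moment generating function of `Z_Δ = 2c_Δ X_Δ` given `X_0 = x`:
    (hMGF : ∀ x : ℝ, 0 < x → ∀ s' : ℝ, s' < 1 / 2 →
      ∫⁻ y, ENNReal.ofReal (Real.exp (s' * (2 * cΔ * y))) ∂(M x)
        = ENNReal.ofReal (Real.exp (2 * cΔ * x * s' * (Real.exp (-(θ * Δ)) / (1 - 2 * s'))
            - κ / 2 * Real.log (1 - 2 * s'))))
    (s δ d : ℝ)
    (hs : s ∈ Set.Ioo 0 ((1 - Real.exp (-(θ * Δ))) / 2))
    (hδ : δ ∈ Set.Ioo 0 (1 - Real.exp (-(θ * Δ)) / (1 - 2 * s)))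
    (hd : (1 - 2 * θ * μ * Real.log (1 - 2 * s) / σ ^ 2)
            / (1 - Real.exp (-(θ * Δ)) / (1 - 2 * s) - δ) ≤ d) :
    ∀ x : ℝ, 0 < x →
      ∫⁻ y, ENNReal.ofReal (Real.exp (1 + 2 * cΔ * s * y)) ∂(M x)
        ≤ ENNReal.ofReal (Real.exp ((1 + 2 * cΔ * s * x) * (1 - δ)
            + (d * (Real.exp (-(θ * Δ)) / (1 - 2 * s))
                - 2 * θ * μ / σ ^ 2 * Real.log (1 - 2 * s) + 1)
              * Set.indicator {z : ℝ | 1 + 2 * cΔ * s * z ≤ d} (fun _ => (1 : ℝ)) x)) := by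

  intro x hx
  -- basic facts
  set E := Real.exp (-(θ * Δ)) with hE
  have hE0 : 0 < E := Real.exp_pos _
  have hE1 : E < 1 := Real.exp_lt_one_iff.mpr (by nlinarith)
  obtain ⟨hs0, hs1⟩ := hs
  have h2s : E < 1 - 2 * s := by linarith
  have h2s0 : 0 < 1 - 2 * s := by linarith
  have hshalf : s < 1 / 2 := by linarith
  have hσ2 : 0 < σ ^ 2 := by positivity
  have hc : 0 < cΔ := by
    rw [hcΔ]; apply div_pos (by positivity); nlinarith
  set r := E / (1 - 2 * s) with hr
  have hr0 : 0 < r := by positivity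
  have hr1 : r < 1 := (div_lt_one h2s0).mpr h2s
  set L := Real.log (1 - 2 * s) with hL
  have hLneg : L < 0 := Real.log_neg h2s0 (by linarith)
  obtain ⟨hδ0, hδ1⟩ := hδ
  have hα : 0 < 1 - r - δ := by linarith
  have hκ2 : κ / 2 = 2 * θ * μ / σ ^ 2 := by rw [hκ]; ring
  have hd' : 1 - 2 * θ * μ * L / σ ^ 2 ≤ d * (1 - r - δ) :=
    (div_le_iff₀ hα).mp hd
  -- reduce the integrand
  have hrw : ∀ y : ℝ, ENNReal.ofReal (Real.exp (1 + 2 * cΔ * s * y))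
      = ENNReal.ofReal (Real.exp 1) * ENNReal.ofReal (Real.exp (s * (2 * cΔ * y))) := by
    intro y
    rw [← ENNReal.ofReal_mul (Real.exp_pos 1).le, ← Real.exp_add]
    ring_nf
  simp_rw [hrw]
  rw [lintegral_const_mul' _ _ ENNReal.ofReal_ne_top, hMGF x hx s hshalf,
    ← ENNReal.ofReal_mul (Real.exp_pos 1).le, ← Real.exp_add]
  apply ENNReal.ofReal_le_ofReal
  apply Real.exp_le_exp.mpr
  have hEr : 2 * cΔ * x * s * (E / (1 - 2 * s)) = 2 * cΔ * s * x * r := by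
    rw [hr]; ring
  rw [hEr, ← hL]
  set v := 2 * cΔ * s * x with hv
  have hv0 : 0 < v := by positivity
  by_cases hxd : x ∈ {z : ℝ | 1 + 2 * cΔ * s * z ≤ d}
  · rw [Set.indicator_of_mem hxd]
    have hvd : 1 + v ≤ d := hxd
    rw [hκ2] at *
    nlinarith [mul_pos hr0 hv0]
  · rw [Set.indicator_of_notMem hxd]
    have hvd : d < 1 + v := lt_of_not_ge hxd
    rw [hκ2] at *
    have hk : 2 * θ * μ * L / σ ^ 2 = 2 * θ * μ / σ ^ 2 * L := by ring
    rw [hk] at hd'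
    nlinarith [mul_lt_mul_of_pos_right hvd hα]
end
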